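/- Let 0 < α < β be real numbers and set t_* := (β/α)^{1/(α−β)}. Then for all s ∈ (0, t_*/2) and all t ∈ (s, t_*): (t − s)^β + s^α − s^β ≤ t^α. -/

import Mathlib

open Real Set

lemma stmt_10_mono (α β : ℝ) (hα : 0 < α) (hαβ : α < β)
    (tstar : ℝ) (htstar : tstar = (β / α) ^ (1 / (α - β)))
    (a b : ℝ) (ha : 0 < a) (hab : a ≤ b) (hb : b ≤ tstar) :
    a ^ α - a ^ β ≤ b ^ α - b ^ β := by
  have hβ : 0 < β := hα.trans hαβ
  have hba : (0:ℝ) < β / α := by positivity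
  have hne : α - β ≠ 0 := by linarith
  have hts0 : 0 < tstar := by rw [htstar]; positivity
  have hpow : tstar ^ (β - α) = α / β := by
    rw [htstar, ← Real.rpow_mul hba.le]
    have : 1 / (α - β) * (β - α) = -1 := by
      field_simp
      ring
    rw [this, Real.rpow_neg_one, inv_div]
  -- derivative nonneg
  have hd : ∀ x ∈ Set.Ioo a b, HasDerivAt (fun x : ℝ => x ^ α - x ^ β)
      (α * x ^ (α - 1) - β * x ^ (β - 1)) x := by
    intro x hx
    have hx0 : 0 < x := ha.trans hx.1
    exact (Real.hasDerivAt_rpow_const (Or.inl hx0.ne')).sub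
      (Real.hasDerivAt_rpow_const (Or.inl hx0.ne'))
  have hnn : ∀ x ∈ Set.Ioo a b, 0 ≤ α * x ^ (α - 1) - β * x ^ (β - 1) := by
    intro x hx
    have hx0 : 0 < x := ha.trans hx.1
    have hsplit : x ^ (β - 1) = x ^ (β - α) * x ^ (α - 1) := by
      rw [← Real.rpow_add hx0]; ring_nf
    have h1 : x ^ (β - α) ≤ tstar ^ (β - α) :=
      Real.rpow_le_rpow hx0.le (le_trans hx.2.le hb) (by linarith)
    rw [hpow] at h1
    have h2 : β * x ^ (β - α) ≤ α := by
      calc β * x ^ (β - α) ≤ β * (α / β) := by nlinarith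
        _ = α := by field_simp
    have h3 : (0:ℝ) ≤ x ^ (α - 1) := Real.rpow_nonneg hx0.le _
    rw [hsplit]
    nlinarith
  have hmono : MonotoneOn (fun x : ℝ => x ^ α - x ^ β) (Set.Icc a b) := by
    apply monotoneOn_of_deriv_nonneg (convex_Icc a b)
    · apply ContinuousOn.sub
      · exact continuousOn_id.rpow_const fun x hx => Or.inl (ne_of_gt (lt_of_lt_of_le ha hx.1))
      · exact continuousOn_id.rpow_const fun x hx => Or.inl (ne_of_gt (lt_of_lt_of_le ha hx.1))
    · rw [interior_Icc]
      intro x hx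
      exact ((hd x hx).differentiableAt).differentiableWithinAt
    · rw [interior_Icc]
      intro x hx
      rw [(hd x hx).deriv]
      exact hnn x hx
  exact hmono (Set.left_mem_Icc.mpr hab) (Set.right_mem_Icc.mpr hab) hab

theorem stmt_10 (α β : ℝ) (hα : 0 < α) (hαβ : α < β)
    (tstar : ℝ) (htstar : tstar = (β / α) ^ (1 / (α - β)))
    (s t : ℝ) (hs : s ∈ Set.Ioo 0 (tstar / 2)) (ht : t ∈ Set.Ioo s tstar) :
    (t - s) ^ β + s ^ α - s ^ β ≤ t ^ α := by
  obtain ⟨hs0, hs2⟩ := hs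
  obtain ⟨hst, htt⟩ := ht
  have hβ : 0 < β := hα.trans hαβ
  by_cases hc : t ≤ 2 * s
  · have h1 : (t - s) ^ β ≤ s ^ β :=
      Real.rpow_le_rpow (by linarith) (by linarith) hβ.le
    have h2 : s ^ α ≤ t ^ α :=
      Real.rpow_le_rpow hs0.le hst.le hα.le
    linarith
  · push_neg at hc
    have hu : s ≤ t - s := by linarith
    have key := stmt_10_mono α β hα hαβ tstar htstar s (t - s) hs0 hu (by linarith)
    have h2 : (t - s) ^ α ≤ t ^ α :=
      Real.rpow_le_rpow (by linarith) (by linarith) hα.le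
    linarith
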